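/- For x ∈ ℂ with Im(x) < 0 and positive integers s, s', p: −sin(sx)sin(s'x)/(sin(x)sin(px)) = ∑_{ℓ'=0}^∞ e^{−ipx(2ℓ'+1)} ∑_{ℓ=|s'−s|+1, ℓ≡s+s'+1 (mod 2)}^{s'+s−1} (e^{−ixℓ} − e^{ixℓ}). -/

import Mathlib

open Complex

lemma sin_ne_zero_of_im (z : ℂ) (hz : z.im ≠ 0) : Complex.sin z ≠ 0 := by
  intro h
  rw [Complex.sin_eq_zero_iff] at h
  obtain ⟨k, hk⟩ := h
  apply hz
  rw [hk]
  simp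

set_option maxHeartbeats 1600000 in
lemma alg8 (v a b c : ℂ) (hv : v ≠ 0) (ha : a ≠ 0) (hb : b ≠ 0) (hc : c ≠ 0)
    (hvu : v - v⁻¹ ≠ 0) (hQP : c - c⁻¹ ≠ 0) (hgeo : 1 - c ^ 2 ≠ 0)
    (hv2 : v ^ 2 - 1 ≠ 0) (hu2 : (v ^ 2)⁻¹ - 1 ≠ 0) :
    -((a * b - (a * b)⁻¹) * I / 2 * ((a - a⁻¹) * I / 2)) /
        ((v - v⁻¹) * I / 2 * ((c - c⁻¹) * I / 2)) =
      (1 - c ^ 2)⁻¹ * (c * (b * v * ((a ^ 2 - 1) / (v ^ 2 - 1)) -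
        (b * v)⁻¹ * (((a ^ 2)⁻¹ - 1) / ((v ^ 2)⁻¹ - 1)))) := by
  have hI : I ≠ 0 := I_ne_zero
  have hc2 : c ^ 2 - 1 ≠ 0 := fun h => hgeo (by linear_combination -h)
  have hbv : b * v ≠ 0 := mul_ne_zero hb hv
  have ha2 : a ^ 2 ≠ 0 := pow_ne_zero 2 ha
  have hC : ((a ^ 2)⁻¹ - 1) / ((v ^ 2)⁻¹ - 1) = v ^ 2 * (a ^ 2 - 1) / (a ^ 2 * (v ^ 2 - 1)) := by
    rw [div_eq_div_iff hu2 (mul_ne_zero ha2 hv2)]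
    field_simp
    ring
  have hL1 : (a * b - (a * b)⁻¹) * I / 2 * ((a - a⁻¹) * I / 2) =
      -((a ^ 2 * b ^ 2 - 1) * (a ^ 2 - 1)) / (4 * (a ^ 2 * b)) := by
    field_simp
    linear_combination (4 - a ^ 2 * 4 - a ^ 2 * b ^ 2 * 4 + a ^ 4 * b ^ 2 * 4) *
      Complex.I_sq
  have hL2 : (v - v⁻¹) * I / 2 * ((c - c⁻¹) * I / 2) =
      -((v ^ 2 - 1) * (c ^ 2 - 1)) / (4 * (v * c)) := by
    field_simp
    linear_combination (4) *
      Complex.I_sq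
  have hR : b * v * ((a ^ 2 - 1) / (v ^ 2 - 1)) -
      (b * v)⁻¹ * (v ^ 2 * (a ^ 2 - 1) / (a ^ 2 * (v ^ 2 - 1))) =
      (a ^ 2 - 1) * (a ^ 2 * b ^ 2 - 1) * v / (a ^ 2 * b * (v ^ 2 - 1)) := by
    rw [inv_mul_eq_div, div_div, ← mul_div_assoc,
      div_sub_div _ _ hv2 (mul_ne_zero (mul_ne_zero ha2 hv2) hbv),
      div_eq_div_iff (mul_ne_zero hv2 (mul_ne_zero (mul_ne_zero ha2 hv2) hbv))
        (mul_ne_zero (mul_ne_zero ha2 hb) hv2)]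
    ring
  rw [hC, hL1, hL2, hR]
  field_simp
  ring

set_option maxHeartbeats 1600000 in
lemma aux8 (x : ℂ) (m M p : ℕ) (hx : x.im < 0) (hp : 0 < p) (hmM : m ≤ M) :
    -(Complex.sin ((M : ℂ) * x) * Complex.sin ((m : ℂ) * x)) /
        (Complex.sin x * Complex.sin ((p : ℂ) * x)) =
      ∑' l' : ℕ, Complex.exp (-I * (p : ℂ) * x * (2 * (l' : ℂ) + 1)) *
        ∑ j ∈ Finset.range m,
          (Complex.exp (-I * x * (((M - m : ℕ) : ℂ) + 1 + 2 * (j : ℂ))) -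
           Complex.exp (I * x * (((M - m : ℕ) : ℂ) + 1 + 2 * (j : ℂ)))) := by
  obtain ⟨d, rfl⟩ : ∃ d, M = m + d := ⟨M - m, by omega⟩
  rw [show m + d - m = d from by omega]
  set v := Complex.exp (-I * x) with hv
  set u := Complex.exp (I * x) with hu
  have hv0 : v ≠ 0 := Complex.exp_ne_zero _
  have hu_inv : u = v⁻¹ := by
    rw [hu, hv, ← Complex.exp_neg]
    congr 1
    ring
  have hvlt : ‖v‖ < 1 := by
    rw [hv, Complex.norm_exp]
    have h1 : (-I * x).re = x.im := by simp
    rw [h1]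
    exact Real.exp_lt_one_iff.mpr hx
  have hvpow : ∀ n : ℕ, n ≠ 0 → v ^ n ≠ 1 := by
    intro n hn h
    have : ‖v ^ n‖ < 1 := by
      rw [norm_pow]
      exact pow_lt_one₀ (norm_nonneg v) hvlt hn
    rw [h] at this
    simp at this
  have hv2 : v ^ 2 ≠ 1 := hvpow 2 two_ne_zero
  have hu2 : u ^ 2 ≠ 1 := by
    rw [hu_inv, inv_pow]
    intro h
    exact hv2 (by rwa [inv_eq_one] at h)
  have hgeo : 1 - v ^ (2 * p) ≠ 0 := by
    intro h
    exact hvpow (2 * p) (by omega) (by linear_combination -h)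
  -- rewrite sines
  have hsin_nat : ∀ n : ℕ, Complex.sin ((n : ℂ) * x) = (v ^ n - u ^ n) * I / 2 := by
    intro n
    rw [Complex.sin, show -((n : ℂ) * x) * I = (n : ℂ) * (-I * x) by ring,
      show ((n : ℂ) * x) * I = (n : ℂ) * (I * x) by ring,
      Complex.exp_nat_mul, Complex.exp_nat_mul]
  have hsinx_eq : Complex.sin x = (v - u) * I / 2 := by
    rw [Complex.sin, show -x * I = -I * x by ring, show x * I = I * x by ring]
  have hsinx : Complex.sin x ≠ 0 := sin_ne_zero_of_im x (ne_of_lt hx)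
  have hsinpx : Complex.sin ((p : ℂ) * x) ≠ 0 := by
    apply sin_ne_zero_of_im
    have : ((p : ℂ) * x).im = (p : ℝ) * x.im := by simp
    rw [this]
    exact ne_of_lt (mul_neg_of_pos_of_neg (by exact_mod_cast hp) hx)
  have hvu : v - u ≠ 0 := by
    intro h
    apply hsinx
    rw [hsinx_eq, h, zero_mul, zero_div]
  have hQP : v ^ p - u ^ p ≠ 0 := by
    intro h
    apply hsinpx
    rw [hsin_nat p, h, zero_mul, zero_div]
  -- inner sum
  have hinner : (∑ j ∈ Finset.range m,
      (Complex.exp (-I * x * ((d : ℂ) + 1 + 2 * (j : ℂ))) -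
       Complex.exp (I * x * ((d : ℂ) + 1 + 2 * (j : ℂ))))) =
      v ^ (d + 1) * (((v ^ 2) ^ m - 1) / (v ^ 2 - 1)) -
      u ^ (d + 1) * (((u ^ 2) ^ m - 1) / (u ^ 2 - 1)) := by
    have h1 : ∀ j ∈ Finset.range m,
        (Complex.exp (-I * x * ((d : ℂ) + 1 + 2 * (j : ℂ))) -
         Complex.exp (I * x * ((d : ℂ) + 1 + 2 * (j : ℂ)))) =
        v ^ (d + 1) * (v ^ 2) ^ j - u ^ (d + 1) * (u ^ 2) ^ j := by
      intro j _
      rw [show -I * x * ((d : ℂ) + 1 + 2 * (j : ℂ)) = ((d + 1 + 2 * j : ℕ) : ℂ) * (-I * x) by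
          push_cast; ring,
        show I * x * ((d : ℂ) + 1 + 2 * (j : ℂ)) = ((d + 1 + 2 * j : ℕ) : ℂ) * (I * x) by
          push_cast; ring,
        Complex.exp_nat_mul, Complex.exp_nat_mul, ← hv, ← hu]
      ring
    rw [Finset.sum_congr rfl h1, Finset.sum_sub_distrib, ← Finset.mul_sum, ← Finset.mul_sum,
      geom_sum_eq hv2, geom_sum_eq hu2]
  -- outer sum
  have houter : ∀ l' : ℕ, Complex.exp (-I * (p : ℂ) * x * (2 * (l' : ℂ) + 1)) =
      (v ^ (2 * p)) ^ l' * v ^ p := by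
    intro l'
    rw [show -I * (p : ℂ) * x * (2 * (l' : ℂ) + 1) = ((2 * p * l' + p : ℕ) : ℂ) * (-I * x) by
        push_cast; ring,
      Complex.exp_nat_mul, pow_add, pow_mul]
  have htsum : (∑' l' : ℕ, Complex.exp (-I * (p : ℂ) * x * (2 * (l' : ℂ) + 1)) *
      ∑ j ∈ Finset.range m,
        (Complex.exp (-I * x * ((d : ℂ) + 1 + 2 * (j : ℂ))) -
         Complex.exp (I * x * ((d : ℂ) + 1 + 2 * (j : ℂ))))) =
      (1 - v ^ (2 * p))⁻¹ * (v ^ p *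
        (v ^ (d + 1) * (((v ^ 2) ^ m - 1) / (v ^ 2 - 1)) -
         u ^ (d + 1) * (((u ^ 2) ^ m - 1) / (u ^ 2 - 1)))) := by
    have hnorm : ‖v ^ (2 * p)‖ < 1 := by
      rw [norm_pow]
      exact pow_lt_one₀ (norm_nonneg v) hvlt (by omega)
    calc (∑' l' : ℕ, Complex.exp (-I * (p : ℂ) * x * (2 * (l' : ℂ) + 1)) *
          ∑ j ∈ Finset.range m,
            (Complex.exp (-I * x * ((d : ℂ) + 1 + 2 * (j : ℂ))) -
             Complex.exp (I * x * ((d : ℂ) + 1 + 2 * (j : ℂ)))))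
        = ∑' l' : ℕ, (v ^ (2 * p)) ^ l' *
            (v ^ p * (v ^ (d + 1) * (((v ^ 2) ^ m - 1) / (v ^ 2 - 1)) -
             u ^ (d + 1) * (((u ^ 2) ^ m - 1) / (u ^ 2 - 1)))) := by
          refine tsum_congr fun l' => ?_
          rw [houter l', hinner]
          ring
      _ = (∑' l' : ℕ, (v ^ (2 * p)) ^ l') *
            (v ^ p * (v ^ (d + 1) * (((v ^ 2) ^ m - 1) / (v ^ 2 - 1)) -
             u ^ (d + 1) * (((u ^ 2) ^ m - 1) / (u ^ 2 - 1)))) := tsum_mul_right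
      _ = _ := by rw [tsum_geometric_of_norm_lt_one hnorm]
  rw [htsum, hsin_nat, hsin_nat, hsin_nat, hsinx_eq, hu_inv]
  simp only [inv_pow]
  rw [pow_add v m d, pow_add v d 1, pow_one,
      show 2 * p = p * 2 from Nat.mul_comm 2 p, pow_mul v p 2,
      show (v ^ 2) ^ m = (v ^ m) ^ 2 from by rw [← pow_mul, ← pow_mul, Nat.mul_comm]]
  have hvu' : v - v⁻¹ ≠ 0 := by rwa [hu_inv] at hvu
  have hQP' : v ^ p - (v ^ p)⁻¹ ≠ 0 := by
    rw [hu_inv, inv_pow] at hQP; exact hQP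
  have hgeo' : 1 - (v ^ p) ^ 2 ≠ 0 := by
    rwa [show 2 * p = p * 2 from Nat.mul_comm 2 p, pow_mul v p 2] at hgeo
  have hv2' : v ^ 2 - 1 ≠ 0 := sub_ne_zero.mpr hv2
  have hu2'' : (v ^ 2)⁻¹ - 1 ≠ 0 := by
    intro h
    apply hv2
    have h2 : (v ^ 2)⁻¹ = 1 := by linear_combination h
    rwa [inv_eq_one] at h2
  exact alg8 v (v ^ m) (v ^ d) (v ^ p) hv0 (pow_ne_zero _ hv0) (pow_ne_zero _ hv0)
    (pow_ne_zero _ hv0) hvu' hQP' hgeo' hv2' hu2''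

/-- `−sin(sx)sin(s'x)/(sin(x)sin(px)) = ∑_{ℓ'=0}^∞ e^{−ipx(2ℓ'+1)} ∑_ℓ (e^{−ixℓ} − e^{ixℓ})`,
where the inner sum runs over `ℓ = |s−s'|+1+2j`, `j = 0, …, min(s,s')−1`. -/
theorem stmt8 (x : ℂ) (s s' p : ℕ) (hx : x.im < 0)
    (hs : 0 < s) (hs' : 0 < s') (hp : 0 < p) :
    -(Complex.sin ((s : ℂ) * x) * Complex.sin ((s' : ℂ) * x)) /
        (Complex.sin x * Complex.sin ((p : ℂ) * x)) =
      ∑' l' : ℕ, Complex.exp (-I * (p : ℂ) * x * (2 * (l' : ℂ) + 1)) *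
        ∑ j ∈ Finset.range (min s s'),
          (Complex.exp (-I * x * (((max s s' - min s s' : ℕ) : ℂ) + 1 + 2 * (j : ℂ))) -
           Complex.exp (I * x * (((max s s' - min s s' : ℕ) : ℂ) + 1 + 2 * (j : ℂ)))) := by
  rcases le_total s s' with h | h
  · rw [min_eq_left h, max_eq_right h,
      mul_comm (Complex.sin ((s : ℂ) * x)) (Complex.sin ((s' : ℂ) * x))]
    exact aux8 x s s' p hx hp h
  · rw [min_eq_right h, max_eq_left h]
    exact aux8 x s' s p hx hp h
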